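/- Let m ≥ 2 and let τ ∈ S_m be a permutation that contains tightly neither the pattern 12 nor the pattern 21. Then for all n ≥ 3, all l with 2 ≤ l ≤ n-1, and all k with 1 ≤ k ≤ n-l+1, one has |A^{(n)}_{l;k} ∩ S_n(τ)| ≥ 2·|S_{n-l+1}(τ)|; equivalently, P_n^{av(τ)}(A^{(n)}_{l;k}) ≥ 2·|S_{n-l+1}(τ)| / |S_n(τ)|. -/
import Mathlib

open Filter

def Contains {n m : ℕ} (σ : Fin n → Fin n) (τ : Fin m → Fin m) : Prop :=
  ∃ f : Fin m → Fin n, StrictMono f ∧ ∀ j k : Fin m, σ (f j) < σ (f k) ↔ τ j < τ k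

def Avoids {n m : ℕ} (σ : Fin n → Fin n) (τ : Fin m → Fin m) : Prop :=
  ¬ Contains σ τ

def AvoidSet (n : ℕ) {m : ℕ} (τ : Equiv.Perm (Fin m)) : Set (Equiv.Perm (Fin n)) :=
  {σ : Equiv.Perm (Fin n) | Avoids ⇑σ ⇑τ}

def ClusterAt {n : ℕ} (l k a : ℕ) (σ : Equiv.Perm (Fin n)) : Prop :=
  (Finset.univ.filter fun i : Fin n => a ≤ (i : ℕ) + 1 ∧ (i : ℕ) + 1 < a + l).image
      (fun i => (σ i : ℕ) + 1) = Finset.Ico k (k + l)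

def ClusterEvent (n l k : ℕ) : Set (Equiv.Perm (Fin n)) :=
  {σ : Equiv.Perm (Fin n) | ∃ a : ℕ, 1 ≤ a ∧ a ≤ n - l + 1 ∧ ClusterAt l k a σ}

def ClusterFree {m : ℕ} (τ : Equiv.Perm (Fin m)) : Prop :=
  ∀ l a k : ℕ, 2 ≤ l → l ≤ m - 1 → 1 ≤ a → a + l ≤ m + 1 → ¬ ClusterAt l k a τ

def ContainsTightly12 {m : ℕ} (τ : Equiv.Perm (Fin m)) : Prop :=
  ∃ i j : Fin m, (j : ℕ) = (i : ℕ) + 1 ∧ (τ j : ℕ) = (τ i : ℕ) + 1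

def ContainsTightly21 {m : ℕ} (τ : Equiv.Perm (Fin m)) : Prop :=
  ∃ i j : Fin m, (j : ℕ) = (i : ℕ) + 1 ∧ (τ i : ℕ) = (τ j : ℕ) + 1

def perm123 : Equiv.Perm (Fin 3) := Equiv.refl (Fin 3)

def perm321 : Equiv.Perm (Fin 3) :=
  ⟨![2, 1, 0], ![2, 1, 0], by intro x; fin_cases x <;> rfl, by intro x; fin_cases x <;> rfl⟩

def p2413 : Equiv.Perm (Fin 4) :=
  ⟨![1, 3, 0, 2], ![2, 0, 3, 1], by intro x; fin_cases x <;> rfl, by intro x; fin_cases x <;> rfl⟩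

def p3142 : Equiv.Perm (Fin 4) :=
  ⟨![2, 0, 3, 1], ![1, 3, 0, 2], by intro x; fin_cases x <;> rfl, by intro x; fin_cases x <;> rfl⟩

def SepSet (n : ℕ) : Set (Equiv.Perm (Fin n)) :=
  {σ : Equiv.Perm (Fin n) | Avoids ⇑σ ⇑p2413 ∧ Avoids ⇑σ ⇑p3142}



/-- shift values `≥ v` up by `L`. -/
def liftV (v L x : ℕ) : ℕ := if x < v then x else x + L

lemma liftV_inj {v L x y : ℕ} (h : liftV v L x = liftV v L y) : x = y := by
  unfold liftV at h; split_ifs at h <;> omega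

lemma liftV_lt_iff {v L x y : ℕ} : liftV v L x < liftV v L y ↔ x < y := by
  unfold liftV; split_ifs <;> omega

lemma liftV_range {v L x : ℕ} (h : x ≠ v) : liftV v L x < v ∨ v + L < liftV v L x := by
  unfold liftV; split_ifs <;> omega

/-- the inflation of `σ'` at value `v`, with a monotone block of length `L+1`,
increasing if `d = true`, decreasing if `d = false`. -/
def inflFun (N L : ℕ) (σ' : Equiv.Perm (Fin N)) (v : Fin N) (d : Bool) :
    Fin (N + L) → Fin (N + L) := fun i =>
  if h1 : (i : ℕ) < (σ'.symm v : ℕ) then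
    ⟨liftV v L (σ' ⟨i, by have := (σ'.symm v).is_lt; omega⟩),
      by have := (σ' ⟨i, by have := (σ'.symm v).is_lt; omega⟩).is_lt
         unfold liftV; split_ifs <;> omega⟩
  else if h2 : (i : ℕ) ≤ (σ'.symm v : ℕ) + L then
    ⟨if d then (v : ℕ) + ((i : ℕ) - (σ'.symm v : ℕ))
      else (v : ℕ) + L - ((i : ℕ) - (σ'.symm v : ℕ)),
      by have := v.is_lt; split_ifs <;> omega⟩
  else
    ⟨liftV v L (σ' ⟨(i : ℕ) - L, by have := i.is_lt; omega⟩),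
      by have := (σ' ⟨(i : ℕ) - L, by have := i.is_lt; omega⟩).is_lt
         unfold liftV; split_ifs <;> omega⟩

lemma inflFun_lt {N L : ℕ} (σ' : Equiv.Perm (Fin N)) (v : Fin N) (d : Bool)
    (i : Fin (N + L)) (h : (i : ℕ) < (σ'.symm v : ℕ)) :
    ((inflFun N L σ' v d i : ℕ)) = liftV v L (σ' ⟨i, by have := (σ'.symm v).is_lt; omega⟩) := by
  rw [inflFun, dif_pos h]

lemma inflFun_block {N L : ℕ} (σ' : Equiv.Perm (Fin N)) (v : Fin N) (d : Bool)
    (i : Fin (N + L)) (h1 : (σ'.symm v : ℕ) ≤ (i : ℕ)) (h2 : (i : ℕ) ≤ (σ'.symm v : ℕ) + L) :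
    ((inflFun N L σ' v d i : ℕ)) =
      if d then (v : ℕ) + ((i : ℕ) - (σ'.symm v : ℕ))
      else (v : ℕ) + L - ((i : ℕ) - (σ'.symm v : ℕ)) := by
  rw [inflFun, dif_neg (by omega), dif_pos h2]

lemma inflFun_gt {N L : ℕ} (σ' : Equiv.Perm (Fin N)) (v : Fin N) (d : Bool)
    (i : Fin (N + L)) (h : (σ'.symm v : ℕ) + L < (i : ℕ)) :
    ((inflFun N L σ' v d i : ℕ)) =
      liftV v L (σ' ⟨(i : ℕ) - L, by have := i.is_lt; omega⟩) := by
  rw [inflFun, dif_neg (by omega), dif_neg (by omega)]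

lemma apply_ne_v {N : ℕ} (σ' : Equiv.Perm (Fin N)) (v : Fin N) {i : ℕ} (hi : i < N)
    (h : i ≠ (σ'.symm v : ℕ)) : (σ' ⟨i, hi⟩ : ℕ) ≠ (v : ℕ) := by
  intro hc
  apply h
  have : σ' ⟨i, hi⟩ = v := Fin.ext hc
  have : (⟨i, hi⟩ : Fin N) = σ'.symm v := by
    rw [← this, Equiv.symm_apply_apply]
  exact congrArg Fin.val this

lemma inflFun_injective (N L : ℕ) (σ' : Equiv.Perm (Fin N)) (v : Fin N) (d : Bool) :
    Function.Injective (inflFun N L σ' v d) := by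
  intro i j h
  have h' : (inflFun N L σ' v d i : ℕ) = (inflFun N L σ' v d j : ℕ) := congrArg Fin.val h
  have hp : (σ'.symm v : ℕ) < N := (σ'.symm v).is_lt
  have hv : (v : ℕ) < N := v.is_lt
  have hi := i.is_lt
  have hj := j.is_lt
  apply Fin.ext
  have hmem : ∀ (x : ℕ) (hx : x ≠ (σ'.symm v : ℕ)) (hxN : x < N),
      liftV v L (σ' ⟨x, hxN⟩) < (v:ℕ) ∨ (v:ℕ) + L < liftV v L (σ' ⟨x, hxN⟩) :=
    fun x hx hxN => liftV_range (apply_ne_v σ' v hxN hx)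
  have zones : ∀ x : ℕ, x < (σ'.symm v : ℕ) ∨ ((σ'.symm v : ℕ) ≤ x ∧ x ≤ (σ'.symm v : ℕ) + L)
      ∨ (σ'.symm v : ℕ) + L < x := by intro x; omega
  have hinj : ∀ (a b : ℕ) (ha : a < N) (hb : b < N),
      (σ' ⟨a, ha⟩ : ℕ) = (σ' ⟨b, hb⟩ : ℕ) → a = b := by
    intro a b ha hb hab
    have := σ'.injective (Fin.ext hab)
    exact congrArg Fin.val this
  rcases zones i with hi1 | ⟨hi1, hi2⟩ | hi1 <;> rcases zones j with hj1 | ⟨hj1, hj2⟩ | hj1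
  · rw [inflFun_lt σ' v d i hi1, inflFun_lt σ' v d j hj1] at h'
    exact hinj _ _ _ _ (liftV_inj h')
  · rw [inflFun_lt σ' v d i hi1, inflFun_block σ' v d j hj1 hj2] at h'
    have := hmem i (by omega) (by omega)
    split_ifs at h' <;> omega
  · rw [inflFun_lt σ' v d i hi1, inflFun_gt σ' v d j hj1] at h'
    have := hinj _ _ _ _ (liftV_inj h')
    omega
  · rw [inflFun_block σ' v d i hi1 hi2, inflFun_lt σ' v d j hj1] at h'
    have := hmem j (by omega) (by omega)
    split_ifs at h' <;> omega
  · rw [inflFun_block σ' v d i hi1 hi2, inflFun_block σ' v d j hj1 hj2] at h'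
    split_ifs at h' <;> omega
  · rw [inflFun_block σ' v d i hi1 hi2, inflFun_gt σ' v d j hj1] at h'
    have := hmem (j - L) (by omega) (by omega)
    split_ifs at h' <;> omega
  · rw [inflFun_gt σ' v d i hi1, inflFun_lt σ' v d j hj1] at h'
    have := hinj _ _ _ _ (liftV_inj h')
    omega
  · rw [inflFun_gt σ' v d i hi1, inflFun_block σ' v d j hj1 hj2] at h'
    have := hmem (i - L) (by omega) (by omega)
    split_ifs at h' <;> omega
  · rw [inflFun_gt σ' v d i hi1, inflFun_gt σ' v d j hj1] at h'
    have := hinj _ _ _ _ (liftV_inj h')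
    omega

noncomputable def inflPerm (N L : ℕ) (σ' : Equiv.Perm (Fin N)) (v : Fin N) (d : Bool) :
    Equiv.Perm (Fin (N + L)) :=
  Equiv.ofBijective (inflFun N L σ' v d)
    (Finite.injective_iff_bijective.mp (inflFun_injective N L σ' v d))

lemma inflPerm_apply (N L : ℕ) (σ' : Equiv.Perm (Fin N)) (v : Fin N) (d : Bool)
    (i : Fin (N + L)) : inflPerm N L σ' v d i = inflFun N L σ' v d i := rfl

lemma inflPerm_val (N L : ℕ) (σ' : Equiv.Perm (Fin N)) (v : Fin N) (d : Bool)
    (i : Fin (N + L)) : ((inflPerm N L σ' v d i : Fin (N + L)) : ℕ) = (inflFun N L σ' v d i : ℕ) :=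
  rfl

lemma inflPerm_clusterAt (N L : ℕ) (σ' : Equiv.Perm (Fin N)) (v : Fin N) (d : Bool) :
    ClusterAt (L + 1) ((v : ℕ) + 1) ((σ'.symm v : ℕ) + 1) (inflPerm N L σ' v d) := by
  have hp : (σ'.symm v : ℕ) < N := (σ'.symm v).is_lt
  have hv : (v : ℕ) < N := v.is_lt
  unfold ClusterAt
  ext x
  simp only [Finset.mem_image, Finset.mem_filter, Finset.mem_univ, true_and, Finset.mem_Ico]
  constructor
  · rintro ⟨i, ⟨hi1, hi2⟩, rfl⟩
    rw [inflPerm_val, inflFun_block σ' v d i (by omega) (by omega)]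
    split_ifs <;> omega
  · rintro ⟨hx1, hx2⟩
    refine ⟨⟨(σ'.symm v : ℕ) + (if d then x - 1 - (v : ℕ) else L - (x - 1 - (v : ℕ))),
      by split_ifs <;> omega⟩, ⟨by simp only [Fin.val_mk]; split_ifs <;> omega,
        by simp only [Fin.val_mk]; split_ifs <;> omega⟩, ?_⟩
    rw [inflPerm_val, inflFun_block σ' v d _ (by simp only [Fin.val_mk]; omega)
      (by simp only [Fin.val_mk]; split_ifs <;> omega)]
    simp only [Fin.val_mk]
    split_ifs <;> omega

lemma inflPerm_lt' {N L : ℕ} (σ' : Equiv.Perm (Fin N)) (v : Fin N) (d : Bool)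
    (i : Fin (N + L)) (h : (i : ℕ) < (σ'.symm v : ℕ)) :
    ((inflPerm N L σ' v d i : Fin (N + L)) : ℕ) =
      liftV v L (σ' ⟨i, by have := (σ'.symm v).is_lt; omega⟩) :=
  inflFun_lt σ' v d i h

lemma inflPerm_block' {N L : ℕ} (σ' : Equiv.Perm (Fin N)) (v : Fin N) (d : Bool)
    (i : Fin (N + L)) (h1 : (σ'.symm v : ℕ) ≤ (i : ℕ)) (h2 : (i : ℕ) ≤ (σ'.symm v : ℕ) + L) :
    ((inflPerm N L σ' v d i : Fin (N + L)) : ℕ) =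
      if d then (v : ℕ) + ((i : ℕ) - (σ'.symm v : ℕ))
      else (v : ℕ) + L - ((i : ℕ) - (σ'.symm v : ℕ)) :=
  inflFun_block σ' v d i h1 h2

lemma inflPerm_gt' {N L : ℕ} (σ' : Equiv.Perm (Fin N)) (v : Fin N) (d : Bool)
    (i : Fin (N + L)) (h : (σ'.symm v : ℕ) + L < (i : ℕ)) :
    ((inflPerm N L σ' v d i : Fin (N + L)) : ℕ) =
      liftV v L (σ' ⟨(i : ℕ) - L, by have := i.is_lt; omega⟩) :=
  inflFun_gt σ' v d i h

/-- values out of the block land out of the value interval `[v, v+L]`. -/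
lemma inflPerm_out_range {N L : ℕ} (σ' : Equiv.Perm (Fin N)) (v : Fin N) (d : Bool)
    (i : Fin (N + L)) (h : (i : ℕ) < (σ'.symm v : ℕ) ∨ (σ'.symm v : ℕ) + L < (i : ℕ)) :
    ((inflPerm N L σ' v d i : Fin (N + L)) : ℕ) < (v : ℕ) ∨
      (v : ℕ) + L < ((inflPerm N L σ' v d i : Fin (N + L)) : ℕ) := by
  have hp := (σ'.symm v).is_lt
  have hi := i.is_lt
  rcases h with h | h
  · rw [inflPerm_lt' σ' v d i h]
    exact liftV_range (apply_ne_v σ' v (by omega) (by omega))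
  · rw [inflPerm_gt' σ' v d i h]
    exact liftV_range (apply_ne_v σ' v (by omega) (by omega))

lemma inflPerm_in_range {N L : ℕ} (σ' : Equiv.Perm (Fin N)) (v : Fin N) (d : Bool)
    (i : Fin (N + L)) (h1 : (σ'.symm v : ℕ) ≤ (i : ℕ)) (h2 : (i : ℕ) ≤ (σ'.symm v : ℕ) + L) :
    (v : ℕ) ≤ ((inflPerm N L σ' v d i : Fin (N + L)) : ℕ) ∧
      ((inflPerm N L σ' v d i : Fin (N + L)) : ℕ) ≤ (v : ℕ) + L := by
  rw [inflPerm_block' σ' v d i h1 h2]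
  split_ifs <;> omega

def deflN (P L x : ℕ) : ℕ := if x ≤ P then x else if x ≤ P + L then P else x - L

lemma deflN_lt {N P L x : ℕ} (hP : P < N) (hx : x < N + L) : deflN P L x < N := by
  unfold deflN; split_ifs <;> omega

lemma deflN_mono {P L a b : ℕ} (hab : a < b)
    (h : ¬(P ≤ a ∧ a ≤ P + L ∧ P ≤ b ∧ b ≤ P + L)) : deflN P L a < deflN P L b := by
  unfold deflN; split_ifs <;> omega

lemma inflPerm_defl_out {N L : ℕ} (σ' : Equiv.Perm (Fin N)) (v : Fin N) (d : Bool)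
    (i : Fin (N + L)) (hd : deflN (σ'.symm v : ℕ) L (i : ℕ) < N)
    (h : (i : ℕ) < (σ'.symm v : ℕ) ∨ (σ'.symm v : ℕ) + L < (i : ℕ)) :
    ((inflPerm N L σ' v d i : Fin (N + L)) : ℕ) =
      liftV v L (σ' ⟨deflN (σ'.symm v : ℕ) L (i : ℕ), hd⟩) ∧
      (σ' ⟨deflN (σ'.symm v : ℕ) L (i : ℕ), hd⟩ : ℕ) ≠ (v : ℕ) := by
  have hp := (σ'.symm v).is_lt
  have hi := i.is_lt
  rcases h with h | h
  · have he : (⟨deflN (σ'.symm v : ℕ) L (i : ℕ), hd⟩ : Fin N) = ⟨(i : ℕ), by omega⟩ := by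
      apply Fin.ext; simp only [Fin.val_mk]; unfold deflN; split_ifs <;> omega
    rw [he, inflPerm_lt' σ' v d i h]
    exact ⟨rfl, apply_ne_v σ' v (by omega) (by omega)⟩
  · have he : (⟨deflN (σ'.symm v : ℕ) L (i : ℕ), hd⟩ : Fin N) = ⟨(i : ℕ) - L, by omega⟩ := by
      apply Fin.ext; simp only [Fin.val_mk]; unfold deflN; split_ifs <;> omega
    rw [he, inflPerm_gt' σ' v d i h]
    exact ⟨rfl, apply_ne_v σ' v (by omega) (by omega)⟩

lemma inflPerm_defl_in {N L : ℕ} (σ' : Equiv.Perm (Fin N)) (v : Fin N)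
    (i : Fin (N + L)) (hd : deflN (σ'.symm v : ℕ) L (i : ℕ) < N)
    (h1 : (σ'.symm v : ℕ) ≤ (i : ℕ)) (h2 : (i : ℕ) ≤ (σ'.symm v : ℕ) + L) :
    (σ' ⟨deflN (σ'.symm v : ℕ) L (i : ℕ), hd⟩ : ℕ) = (v : ℕ) := by
  have he : (⟨deflN (σ'.symm v : ℕ) L (i : ℕ), hd⟩ : Fin N) = σ'.symm v := by
    apply Fin.ext; simp only [Fin.val_mk]; unfold deflN; split_ifs <;> omega
  rw [he, Equiv.apply_symm_apply]

lemma inflPerm_avoids {N L : ℕ} {m : ℕ} (τ : Equiv.Perm (Fin m))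
    (hτ12 : ¬ ContainsTightly12 τ) (hτ21 : ¬ ContainsTightly21 τ)
    (σ' : Equiv.Perm (Fin N)) (hσ' : Avoids ⇑σ' ⇑τ) (v : Fin N) (d : Bool) :
    Avoids ⇑(inflPerm N L σ' v d) ⇑τ := by
  rintro ⟨f, hf, hpat⟩
  have hp : (σ'.symm v : ℕ) < N := (σ'.symm v).is_lt
  have hv : (v : ℕ) < N := v.is_lt
  have hpatN : ∀ j k : Fin m,
      ((inflPerm N L σ' v d (f j) : Fin (N + L)) : ℕ) <
        ((inflPerm N L σ' v d (f k) : Fin (N + L)) : ℕ) ↔ (τ j : ℕ) < (τ k : ℕ) := by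
    intro j k
    rw [← Fin.lt_def, ← Fin.lt_def]
    exact hpat j k
  have zones : ∀ x : ℕ, x < (σ'.symm v : ℕ) ∨
      ((σ'.symm v : ℕ) ≤ x ∧ x ≤ (σ'.symm v : ℕ) + L) ∨ (σ'.symm v : ℕ) + L < x := by
    intro x; omega
  by_cases hJ : ∃ j₁ j₂ : Fin m, j₁ < j₂ ∧
      ((σ'.symm v : ℕ) ≤ (f j₁ : ℕ) ∧ (f j₁ : ℕ) ≤ (σ'.symm v : ℕ) + L) ∧
      ((σ'.symm v : ℕ) ≤ (f j₂ : ℕ) ∧ (f j₂ : ℕ) ≤ (σ'.symm v : ℕ) + L)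
  · -- two pattern positions in the block: tight 12 or tight 21 in τ
    obtain ⟨j₁, j₂, hlt, hB1, hB2⟩ := hJ
    have hltv : (j₁ : ℕ) < (j₂ : ℕ) := Fin.lt_def.mp hlt
    have hm1 : (j₁ : ℕ) + 1 < m := by have := j₂.is_lt; omega
    set j' : Fin m := ⟨(j₁ : ℕ) + 1, hm1⟩ with hj'def
    have hj'val : (j' : ℕ) = (j₁ : ℕ) + 1 := rfl
    have hlt1 : j₁ < j' := Fin.lt_def.mpr (by omega)
    have hle2 : j' ≤ j₂ := Fin.le_def.mpr (by simp only [hj'val]; omega)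
    have hff1 : (f j₁ : ℕ) < (f j' : ℕ) := Fin.lt_def.mp (hf hlt1)
    have hff2 : (f j' : ℕ) ≤ (f j₂ : ℕ) := Fin.le_def.mp (hf.monotone hle2)
    have hB' : (σ'.symm v : ℕ) ≤ (f j' : ℕ) ∧ (f j' : ℕ) ≤ (σ'.symm v : ℕ) + L :=
      ⟨by omega, by omega⟩
    have e1 := inflPerm_block' σ' v d (f j₁) hB1.1 hB1.2
    have e2 := inflPerm_block' σ' v d (f j') hB'.1 hB'.2
    by_cases hd : d = true
    · rw [if_pos hd] at e1 e2
      have hττ : (τ j₁ : ℕ) < (τ j' : ℕ) := (hpatN j₁ j').mp (by omega)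
      by_cases heq : (τ j' : ℕ) = (τ j₁ : ℕ) + 1
      · exact hτ12 ⟨j₁, j', hj'val, heq⟩
      · have hwlt : (τ j₁ : ℕ) + 1 < m := by have := (τ j').is_lt; omega
        set j'' : Fin m := τ.symm ⟨(τ j₁ : ℕ) + 1, hwlt⟩ with hj''def
        have hτ'' : (τ j'' : ℕ) = (τ j₁ : ℕ) + 1 := by
          rw [hj''def, Equiv.apply_symm_apply]
        have h1 : ((inflPerm N L σ' v d (f j₁) : Fin (N + L)) : ℕ) <
            ((inflPerm N L σ' v d (f j'') : Fin (N + L)) : ℕ) := (hpatN _ _).mpr (by omega)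
        have h2 : ((inflPerm N L σ' v d (f j'') : Fin (N + L)) : ℕ) <
            ((inflPerm N L σ' v d (f j') : Fin (N + L)) : ℕ) := (hpatN _ _).mpr (by omega)
        have hBpp : (σ'.symm v : ℕ) ≤ (f j'' : ℕ) ∧ (f j'' : ℕ) ≤ (σ'.symm v : ℕ) + L := by
          rcases zones (f j'') with h | h | h
          · have := inflPerm_out_range σ' v d (f j'') (Or.inl h); omega
          · exact h
          · have := inflPerm_out_range σ' v d (f j'') (Or.inr h); omega
        have e3 := inflPerm_block' σ' v d (f j'') hBpp.1 hBpp.2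
        rw [if_pos hd] at e3
        have hpos1 : f j₁ < f j'' := Fin.lt_def.mpr (by omega)
        have hpos2 : f j'' < f j' := Fin.lt_def.mpr (by omega)
        have hg1 : (j₁ : ℕ) < (j'' : ℕ) := Fin.lt_def.mp (hf.lt_iff_lt.mp hpos1)
        have hg2 : (j'' : ℕ) < (j' : ℕ) := Fin.lt_def.mp (hf.lt_iff_lt.mp hpos2)
        omega
    · rw [if_neg hd] at e1 e2
      have hττ : (τ j' : ℕ) < (τ j₁ : ℕ) := (hpatN j' j₁).mp (by omega)
      by_cases heq : (τ j₁ : ℕ) = (τ j' : ℕ) + 1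
      · exact hτ21 ⟨j₁, j', hj'val, heq⟩
      · have hwlt : (τ j' : ℕ) + 1 < m := by have := (τ j₁).is_lt; omega
        set j'' : Fin m := τ.symm ⟨(τ j' : ℕ) + 1, hwlt⟩ with hj''def
        have hτ'' : (τ j'' : ℕ) = (τ j' : ℕ) + 1 := by
          rw [hj''def, Equiv.apply_symm_apply]
        have h1 : ((inflPerm N L σ' v d (f j') : Fin (N + L)) : ℕ) <
            ((inflPerm N L σ' v d (f j'') : Fin (N + L)) : ℕ) := (hpatN _ _).mpr (by omega)
        have h2 : ((inflPerm N L σ' v d (f j'') : Fin (N + L)) : ℕ) <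
            ((inflPerm N L σ' v d (f j₁) : Fin (N + L)) : ℕ) := (hpatN _ _).mpr (by omega)
        have hBpp : (σ'.symm v : ℕ) ≤ (f j'' : ℕ) ∧ (f j'' : ℕ) ≤ (σ'.symm v : ℕ) + L := by
          rcases zones (f j'') with h | h | h
          · have := inflPerm_out_range σ' v d (f j'') (Or.inl h); omega
          · exact h
          · have := inflPerm_out_range σ' v d (f j'') (Or.inr h); omega
        have e3 := inflPerm_block' σ' v d (f j'') hBpp.1 hBpp.2
        rw [if_neg hd] at e3
        have hpos1 : f j₁ < f j'' := Fin.lt_def.mpr (by omega)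
        have hpos2 : f j'' < f j' := Fin.lt_def.mpr (by omega)
        have hg1 : (j₁ : ℕ) < (j'' : ℕ) := Fin.lt_def.mp (hf.lt_iff_lt.mp hpos1)
        have hg2 : (j'' : ℕ) < (j' : ℕ) := Fin.lt_def.mp (hf.lt_iff_lt.mp hpos2)
        omega
  · -- at most one pattern position in the block: deflate to an occurrence in σ'
    apply hσ'
    have hone : ∀ j k : Fin m,
        ((σ'.symm v : ℕ) ≤ (f j : ℕ) ∧ (f j : ℕ) ≤ (σ'.symm v : ℕ) + L) →
        ((σ'.symm v : ℕ) ≤ (f k : ℕ) ∧ (f k : ℕ) ≤ (σ'.symm v : ℕ) + L) → j = k := by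
      intro j k hj hk
      by_contra hne
      rcases Ne.lt_or_gt hne with h | h
      · exact hJ ⟨j, k, h, hj, hk⟩
      · exact hJ ⟨k, j, h, hk, hj⟩
    have hdl : ∀ j : Fin m, deflN (σ'.symm v : ℕ) L ((f j : Fin (N + L)) : ℕ) < N :=
      fun j => deflN_lt hp (f j).is_lt
    refine ⟨fun j => ⟨deflN (σ'.symm v : ℕ) L ((f j : Fin (N + L)) : ℕ), hdl j⟩, ?_, ?_⟩
    · intro a b hab
      have hfab : (f a : ℕ) < (f b : ℕ) := Fin.lt_def.mp (hf hab)
      have hnb : ¬(((σ'.symm v : ℕ) ≤ (f a : ℕ) ∧ (f a : ℕ) ≤ (σ'.symm v : ℕ) + L) ∧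
          ((σ'.symm v : ℕ) ≤ (f b : ℕ) ∧ (f b : ℕ) ≤ (σ'.symm v : ℕ) + L)) := by
        rintro ⟨ha, hb⟩
        exact absurd (hone a b ha hb) (ne_of_lt hab)
      exact Fin.lt_def.mpr (deflN_mono hfab (by tauto))
    · intro j k
      beta_reduce
      rw [Fin.lt_def, Fin.lt_def, ← hpatN j k]
      rcases zones (f j) with hj | hj | hj <;> rcases zones (f k) with hk | hk | hk
      · have Ej := inflPerm_defl_out σ' v d (f j) (hdl j) (Or.inl hj)
        have Ek := inflPerm_defl_out σ' v d (f k) (hdl k) (Or.inl hk)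
        rw [Ej.1, Ek.1]; exact liftV_lt_iff.symm
      · have Ej := inflPerm_defl_out σ' v d (f j) (hdl j) (Or.inl hj)
        have Ek := inflPerm_defl_in σ' v (f k) (hdl k) hk.1 hk.2
        have hRk := inflPerm_in_range σ' v d (f k) hk.1 hk.2
        obtain ⟨Ej1, Ej2⟩ := Ej
        unfold liftV at Ej1
        split_ifs at Ej1 <;> omega
      · have Ej := inflPerm_defl_out σ' v d (f j) (hdl j) (Or.inl hj)
        have Ek := inflPerm_defl_out σ' v d (f k) (hdl k) (Or.inr hk)
        rw [Ej.1, Ek.1]; exact liftV_lt_iff.symm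
      · have Ej := inflPerm_defl_in σ' v (f j) (hdl j) hj.1 hj.2
        have hRj := inflPerm_in_range σ' v d (f j) hj.1 hj.2
        have Ek := inflPerm_defl_out σ' v d (f k) (hdl k) (Or.inl hk)
        obtain ⟨Ek1, Ek2⟩ := Ek
        unfold liftV at Ek1
        split_ifs at Ek1 <;> omega
      · have hjk : j = k := hone j k hj hk
        subst hjk
        simp
      · have Ej := inflPerm_defl_in σ' v (f j) (hdl j) hj.1 hj.2
        have hRj := inflPerm_in_range σ' v d (f j) hj.1 hj.2
        have Ek := inflPerm_defl_out σ' v d (f k) (hdl k) (Or.inr hk)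
        obtain ⟨Ek1, Ek2⟩ := Ek
        unfold liftV at Ek1
        split_ifs at Ek1 <;> omega
      · have Ej := inflPerm_defl_out σ' v d (f j) (hdl j) (Or.inr hj)
        have Ek := inflPerm_defl_out σ' v d (f k) (hdl k) (Or.inl hk)
        rw [Ej.1, Ek.1]; exact liftV_lt_iff.symm
      · have Ej := inflPerm_defl_out σ' v d (f j) (hdl j) (Or.inr hj)
        have Ek := inflPerm_defl_in σ' v (f k) (hdl k) hk.1 hk.2
        have hRk := inflPerm_in_range σ' v d (f k) hk.1 hk.2
        obtain ⟨Ej1, Ej2⟩ := Ej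
        unfold liftV at Ej1
        split_ifs at Ej1 <;> omega
      · have Ej := inflPerm_defl_out σ' v d (f j) (hdl j) (Or.inr hj)
        have Ek := inflPerm_defl_out σ' v d (f k) (hdl k) (Or.inr hk)
        rw [Ej.1, Ek.1]; exact liftV_lt_iff.symm

lemma inflPerm_eq_v_pos {N L : ℕ} (σ' : Equiv.Perm (Fin N)) (v : Fin N) (d : Bool)
    (i : Fin (N + L)) (h : ((inflPerm N L σ' v d i : Fin (N + L)) : ℕ) = (v : ℕ)) :
    (i : ℕ) = (σ'.symm v : ℕ) + (if d then 0 else L) := by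
  have hp := (σ'.symm v).is_lt
  have hi := i.is_lt
  rcases show (i : ℕ) < (σ'.symm v : ℕ) ∨ ((σ'.symm v : ℕ) ≤ (i : ℕ) ∧
      (i : ℕ) ≤ (σ'.symm v : ℕ) + L) ∨ (σ'.symm v : ℕ) + L < (i : ℕ) by omega with h' | h' | h'
  · have := inflPerm_out_range σ' v d i (Or.inl h'); omega
  · have hb := inflPerm_block' σ' v d i h'.1 h'.2
    split_ifs at hb ⊢ <;> omega
  · have := inflPerm_out_range σ' v d i (Or.inr h'); omega

lemma inflPerm_lt2 {N L : ℕ} (σ' : Equiv.Perm (Fin N)) (v : Fin N) (d : Bool)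
    (i : Fin (N + L)) (h : (i : ℕ) < (σ'.symm v : ℕ)) (j : Fin N) (hij : (j : ℕ) = (i : ℕ)) :
    ((inflPerm N L σ' v d i : Fin (N + L)) : ℕ) = liftV v L (σ' j) := by
  rw [inflPerm_lt' σ' v d i h]
  exact congrArg (fun x => liftV v L ((σ' x : Fin N) : ℕ)) (Fin.ext hij.symm)

lemma inflPerm_gt2 {N L : ℕ} (σ' : Equiv.Perm (Fin N)) (v : Fin N) (d : Bool)
    (i : Fin (N + L)) (h : (σ'.symm v : ℕ) + L < (i : ℕ)) (j : Fin N)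
    (hij : (j : ℕ) + L = (i : ℕ)) :
    ((inflPerm N L σ' v d i : Fin (N + L)) : ℕ) = liftV v L (σ' j) := by
  rw [inflPerm_gt' σ' v d i h]
  exact congrArg (fun x => liftV v L ((σ' x : Fin N) : ℕ))
    (Fin.ext (show ((⟨(i : ℕ) - L, by have := i.is_lt; omega⟩ : Fin N) : ℕ) = (j : ℕ) by
      simp only [Fin.val_mk]; omega))

lemma inflPerm_v_attained {N L : ℕ} (σ' : Equiv.Perm (Fin N)) (v : Fin N) (d : Bool)
    (i : Fin (N + L)) (hi : (i : ℕ) = (σ'.symm v : ℕ) + (if d then 0 else L)) :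
    ((inflPerm N L σ' v d i : Fin (N + L)) : ℕ) = (v : ℕ) := by
  have hb := inflPerm_block' σ' v d i (by split_ifs at hi <;> omega)
    (by split_ifs at hi <;> omega)
  rw [hb]
  split_ifs at hi ⊢ <;> omega

lemma inflPerm_symm_eq {N L : ℕ} {σ₁ σ₂ : Equiv.Perm (Fin N)} (v : Fin N) {d₁ d₂ : Bool}
    (h : inflPerm N L σ₁ v d₁ = inflPerm N L σ₂ v d₂) :
    (σ₁.symm v : ℕ) + (if d₁ then 0 else L) = (σ₂.symm v : ℕ) + (if d₂ then 0 else L) := by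
  have hlt : (σ₁.symm v : ℕ) + (if d₁ then 0 else L) < N + L := by
    have := (σ₁.symm v).is_lt; split_ifs <;> omega
  have h1 := inflPerm_v_attained σ₁ v d₁ ⟨_, hlt⟩ rfl
  rw [h] at h1
  have := inflPerm_eq_v_pos σ₂ v d₂ _ h1
  simpa using this

set_option maxHeartbeats 1000000 in
lemma inflPerm_injective {N L : ℕ} (v : Fin N) (d : Bool) {σ₁ σ₂ : Equiv.Perm (Fin N)}
    (h : inflPerm N L σ₁ v d = inflPerm N L σ₂ v d) : σ₁ = σ₂ := by
  have hP : (σ₁.symm v : ℕ) = (σ₂.symm v : ℕ) := by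
    have := inflPerm_symm_eq v h; omega
  have hp1 := (σ₁.symm v).is_lt
  have happ : ∀ i : Fin (N + L),
      ((inflPerm N L σ₁ v d i : Fin (N + L)) : ℕ) = ((inflPerm N L σ₂ v d i : Fin (N + L)) : ℕ) :=
    fun i => congrArg Fin.val (Equiv.ext_iff.mp h i)
  apply Equiv.ext
  intro q
  have hq := q.is_lt
  apply Fin.ext
  rcases lt_trichotomy (q : ℕ) (σ₁.symm v : ℕ) with hc | hc | hc
  · have e1 := inflPerm_lt2 (L := L) σ₁ v d ⟨(q : ℕ), by omega⟩
      (by simp only [Fin.val_mk]; omega) q rfl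
    have e2 := inflPerm_lt2 (L := L) σ₂ v d ⟨(q : ℕ), by omega⟩
      (by simp only [Fin.val_mk]; omega) q rfl
    have h3 := happ ⟨(q : ℕ), by omega⟩
    rw [e1, e2] at h3
    exact liftV_inj h3
  · have hq1 : q = σ₁.symm v := Fin.ext hc
    have hq2 : q = σ₂.symm v := Fin.ext (by omega)
    have hs : σ₁.symm v = σ₂.symm v := by rw [← hq1, hq2]
    rw [hq1, Equiv.apply_symm_apply, hs, Equiv.apply_symm_apply]
  · have e1 := inflPerm_gt2 (L := L) σ₁ v d ⟨(q : ℕ) + L, by omega⟩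
      (by simp only [Fin.val_mk]; omega) q rfl
    have e2 := inflPerm_gt2 (L := L) σ₂ v d ⟨(q : ℕ) + L, by omega⟩
      (by simp only [Fin.val_mk]; omega) q rfl
    have h3 := happ ⟨(q : ℕ) + L, by omega⟩
    rw [e1, e2] at h3
    exact liftV_inj h3

lemma inflPerm_disjoint {N L : ℕ} (hL : 1 ≤ L) (v : Fin N) (σ₁ σ₂ : Equiv.Perm (Fin N)) :
    inflPerm N L σ₁ v true ≠ inflPerm N L σ₂ v false := by
  intro h
  have hP := inflPerm_symm_eq v h
  simp only [if_true, if_neg Bool.false_ne_true] at hP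
  have hp1 := (σ₁.symm v).is_lt
  have hp2 := (σ₂.symm v).is_lt
  have hv := v.is_lt
  have hPP : (σ₁.symm v : ℕ) = (σ₂.symm v : ℕ) + L := by omega
  have happ := congrArg Fin.val (Equiv.ext_iff.mp h ⟨(σ₂.symm v : ℕ), by omega⟩)
  have e1 := inflPerm_lt2 (L := L) σ₁ v true ⟨(σ₂.symm v : ℕ), by omega⟩
    (by simp only [Fin.val_mk]; omega) (σ₂.symm v) rfl
  have e2 := inflPerm_block' (L := L) σ₂ v false ⟨(σ₂.symm v : ℕ), by omega⟩
    (le_refl _) (by simp only [Fin.val_mk]; omega)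
  rw [e1, e2] at happ
  simp only [Fin.val_mk, if_neg Bool.false_ne_true, Nat.sub_self, Nat.sub_zero] at happ
  have hne : (σ₁ (σ₂.symm v) : ℕ) ≠ (v : ℕ) := by
    intro hc
    have hev : σ₁ (σ₂.symm v) = v := Fin.ext hc
    have h5 := congrArg σ₁.symm hev
    rw [Equiv.symm_apply_apply] at h5
    have := congrArg Fin.val h5
    omega
  have := liftV_range (L := L) hne
  omega

/-- lower bound with factor 2 when `τ` contains tightly neither 12 nor 21. -/
theorem avoid_cluster_lower_bound_two (m : ℕ) (hm : 2 ≤ m) (τ : Equiv.Perm (Fin m))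
    (hτ12 : ¬ ContainsTightly12 τ) (hτ21 : ¬ ContainsTightly21 τ)
    (n : ℕ) (hn : 3 ≤ n) (l : ℕ) (hl2 : 2 ≤ l) (hln : l ≤ n - 1)
    (k : ℕ) (hk1 : 1 ≤ k) (hk2 : k ≤ n - l + 1) :
    2 * (AvoidSet (n - l + 1) τ).ncard ≤ (ClusterEvent n l k ∩ AvoidSet n τ).ncard ∧
    (2 * (AvoidSet (n - l + 1) τ).ncard : ℝ) / ((AvoidSet n τ).ncard : ℝ) ≤
      ((ClusterEvent n l k ∩ AvoidSet n τ).ncard : ℝ) / ((AvoidSet n τ).ncard : ℝ) := by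
  obtain ⟨L, rfl⟩ : ∃ L, l = L + 1 := ⟨l - 1, by omega⟩
  have hL : 1 ≤ L := by omega
  obtain ⟨w, rfl⟩ : ∃ w, k = w + 1 := ⟨k - 1, by omega⟩
  obtain ⟨N, hN2, rfl⟩ : ∃ N, 2 ≤ N ∧ n = N + L := ⟨n - L, by omega, by omega⟩
  have hNL : N + L - (L + 1) + 1 = N := by omega
  rw [hNL]
  have hw : w < N := by omega
  set v : Fin N := ⟨w, hw⟩ with hv
  set S : Set (Equiv.Perm (Fin N)) := AvoidSet N τ with hS
  set T : Set (Equiv.Perm (Fin (N + L))) :=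
    ClusterEvent (N + L) (L + 1) (w + 1) ∩ AvoidSet (N + L) τ with hT
  have hmaps : ∀ (d : Bool) (σ' : Equiv.Perm (Fin N)), σ' ∈ S → inflPerm N L σ' v d ∈ T := by
    intro d σ' hσ'
    constructor
    · refine ⟨(σ'.symm v : ℕ) + 1, by omega, by have := (σ'.symm v).is_lt; omega, ?_⟩
      have hc := inflPerm_clusterAt N L σ' v d
      simpa [hv] using hc
    · exact inflPerm_avoids τ hτ12 hτ21 σ' hσ' v d
  have hinj : ∀ d : Bool, Function.Injective (fun σ' => inflPerm N L σ' v d) :=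
    fun d σ₁ σ₂ h => inflPerm_injective v d h
  have himg : ((fun σ' => inflPerm N L σ' v true) '' S) ∪
      ((fun σ' => inflPerm N L σ' v false) '' S) ⊆ T := by
    rintro x (⟨σ', hσ', rfl⟩ | ⟨σ', hσ', rfl⟩)
    · exact hmaps true σ' hσ'
    · exact hmaps false σ' hσ'
  have hdisj : Disjoint ((fun σ' => inflPerm N L σ' v true) '' S)
      ((fun σ' => inflPerm N L σ' v false) '' S) := by
    rw [Set.disjoint_left]
    rintro x ⟨σ₁, h₁, rfl⟩ ⟨σ₂, h₂, hx⟩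
    exact inflPerm_disjoint hL v σ₁ σ₂ hx.symm
  have hmain : 2 * S.ncard ≤ T.ncard := by
    have e1 : ((fun σ' => inflPerm N L σ' v true) '' S).ncard = S.ncard :=
      Set.ncard_image_of_injective S (hinj true)
    have e2 : ((fun σ' => inflPerm N L σ' v false) '' S).ncard = S.ncard :=
      Set.ncard_image_of_injective S (hinj false)
    have e3 := Set.ncard_union_eq hdisj (Set.toFinite _) (Set.toFinite _)
    have e4 := Set.ncard_le_ncard himg (Set.toFinite T)
    omega
  refine ⟨hmain, ?_⟩
  by_cases hden : ((AvoidSet (N + L) τ).ncard : ℝ) = 0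
  · rw [hden, div_zero, div_zero]
  · have hpos : (0 : ℝ) < ((AvoidSet (N + L) τ).ncard : ℝ) := by
      rcases lt_or_eq_of_le (Nat.cast_nonneg ((AvoidSet (N + L) τ).ncard) : (0:ℝ) ≤ _) with h | h
      · exact h
      · exact absurd h.symm hden
    have hcast : (2 * (S.ncard : ℝ)) ≤ (T.ncard : ℝ) := by exact_mod_cast hmain
    gcongr
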